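/- arXiv:1210.6568 — 7 statements merged into one kernel-verified Lean document; each statement's English description precedes it below -/
import Mathlib

section
/- Let G be a connected graph with at least 2 vertices and chromatic number χ(G) ≤ m+1, where m ≥ 1, and let l ≥ 1. Then χ_=(G ∘^l K_m) ≤ Δ(G ∘^l K_m); that is, the Equitable Coloring Conjecture holds for the graph G ∘^l K_m. -/
open SimpleGraph Finset

/-- The corona `G ∘ H` of two graphs: one copy of `G` and `|V(G)|` copies of `H`,
the `i`-th vertex of `G` being joined to every vertex of the `i`-th copy of `H`. -/
def SimpleGraph.corona {α β : Type*} (G : SimpleGraph α) (H : SimpleGraph β) :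
    SimpleGraph (α ⊕ α × β) where
  Adj x y :=
    match x, y with
    | Sum.inl u, Sum.inl v => G.Adj u v
    | Sum.inl u, Sum.inr (v, _) => u = v
    | Sum.inr (u, _), Sum.inl v => u = v
    | Sum.inr (u, a), Sum.inr (v, b) => u = v ∧ H.Adj a b
  symm := by
    constructor
    rintro (u | ⟨u, a⟩) (v | ⟨v, b⟩) h
    · exact h.symm
    · exact h.symm
    · exact h.symm
    · exact ⟨h.1.symm, h.2.symm⟩
  loopless := by
    constructor
    rintro (u | ⟨u, a⟩) h
    · exact G.loopless.irrefl u h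
    · exact H.loopless.irrefl a h.2

universe u

/-- Vertex type of the `l`-fold corona `G ∘^l H` (with `l = 0` giving `G` itself). -/
def coronaType (α β : Type u) : ℕ → Type u
  | 0 => α
  | l + 1 => coronaType α β l ⊕ coronaType α β l × β

instance coronaType.fintype (α β : Type u) [Fintype α] [Fintype β] :
    ∀ l, Fintype (coronaType α β l)
  | 0 => inferInstanceAs (Fintype α)
  | l + 1 =>
    letI := coronaType.fintype α β l
    inferInstanceAs (Fintype (coronaType α β l ⊕ coronaType α β l × β))

/-- The `l`-fold corona `G ∘^l H`, defined by `G ∘^0 H = G` and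
`G ∘^(l+1) H = (G ∘^l H) ∘ H`. -/
def coronaPow {α β : Type u} (G : SimpleGraph α) (H : SimpleGraph β) :
    ∀ l, SimpleGraph (coronaType α β l)
  | 0 => G
  | l + 1 => (coronaPow G H l).corona H

/-- The canonical copy of a vertex of `G` inside `G ∘^l H`. -/
def coronaBase {α : Type u} (β : Type u) : ∀ l, α → coronaType α β l
  | 0 => id
  | l + 1 => fun a => Sum.inl (coronaBase β l a)

/-- `c` is an equitable `k`-coloring of `G`: it is proper and any two color classes
differ in size by at most one. -/
def SimpleGraph.IsEquitableColoring {V : Type*} [Fintype V] (G : SimpleGraph V) {k : ℕ}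
    (c : V → Fin k) : Prop :=
  (∀ ⦃u v⦄, G.Adj u v → c u ≠ c v) ∧
    ∀ i j : Fin k,
      (Finset.univ.filter fun v => c v = i).card ≤
        (Finset.univ.filter fun v => c v = j).card + 1

/-- `G` is equitably `k`-colorable. -/
def SimpleGraph.EquitablyColorable {V : Type*} [Fintype V] (G : SimpleGraph V) (k : ℕ) : Prop :=
  ∃ c : V → Fin k, G.IsEquitableColoring c

/-- The equitable chromatic number: the least `k` such that `G` is equitably `k`-colorable. -/
noncomputable def SimpleGraph.equitableChromaticNumber {V : Type*} [Fintype V]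
    (G : SimpleGraph V) : ℕ :=
  sInf {k | G.EquitablyColorable k}

/-- The maximum degree of a finite graph (no decidability assumptions). -/
noncomputable def SimpleGraph.maxDeg {V : Type*} [Fintype V] (G : SimpleGraph V) : ℕ :=
  Finset.univ.sup fun v => (G.neighborSet v).ncard


section Aux

variable {V : Type u} [Fintype V]

/-- The key corona step: from a proper `(m+1)`-coloring of `F`, build a proper
`(m+1)`-coloring of `F ∘ K_m` whose every color class has size exactly `|V(F)|`. -/
lemma corona_exists_balanced_coloring (F : SimpleGraph V) (m : ℕ)
    (c : V → Fin (m + 1)) (hc : ∀ ⦃u v⦄, F.Adj u v → c u ≠ c v) :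
    ∃ c' : (V ⊕ V × Fin m) → Fin (m + 1),
      (∀ ⦃u v⦄, (F.corona (⊤ : SimpleGraph (Fin m))).Adj u v → c' u ≠ c' v) ∧
      ∀ i, (Finset.univ.filter fun x => c' x = i).card = Fintype.card V := by
  classical
  refine ⟨Sum.elim c fun p => (c p.1).succAbove p.2, ?_, ?_⟩
  · rintro (u | ⟨u, a⟩) (v | ⟨v, b⟩) h
    · exact hc h
    · obtain rfl : u = v := h
      exact (Fin.succAbove_ne (c u) b).symm
    · obtain rfl : u = v := h
      exact Fin.succAbove_ne (c u) a
    · obtain ⟨rfl, hab⟩ := h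
      exact fun he => hab.ne (Fin.succAbove_right_injective he)
  · intro i
    have key : ∀ v : V,
        ((if c v = i then 1 else 0) +
          ∑ a : Fin m, if (c v).succAbove a = i then 1 else 0) = 1 := by
      intro v
      by_cases h : c v = i
      · have hz : (∑ a : Fin m, if (c v).succAbove a = i then 1 else 0) = 0 :=
          Finset.sum_eq_zero fun a _ =>
            if_neg fun he => Fin.succAbove_ne (c v) a (he.trans h.symm)
        rw [if_pos h, hz]
      · obtain ⟨a₀, ha₀⟩ := Fin.exists_succAbove_eq (Ne.symm h)
        have hone : (Finset.univ.filter fun a : Fin m => (c v).succAbove a = i) = {a₀} := by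
          ext a
          simp only [Finset.mem_filter, Finset.mem_univ, true_and, Finset.mem_singleton]
          exact ⟨fun ha => Fin.succAbove_right_injective (ha.trans ha₀.symm),
            fun ha => ha ▸ ha₀⟩
        rw [if_neg h, ← Finset.card_filter, hone, Finset.card_singleton]
    rw [Finset.card_filter, Fintype.sum_sum_type]
    simp only [Sum.elim_inl, Sum.elim_inr, Fintype.sum_prod_type]
    rw [← Finset.sum_add_distrib]
    exact (Finset.sum_congr rfl fun v _ => key v).trans (by simp)

/-- A proper `(m+1)`-coloring exists at every level of the iterated corona. -/
lemma coronaPow_exists_proper {α : Type} [Fintype α] (G : SimpleGraph α) (m : ℕ)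
    (hcol : G.Colorable (m + 1)) :
    ∀ l, ∃ c : coronaType α (Fin m) l → Fin (m + 1),
      ∀ ⦃u v⦄, (coronaPow G (⊤ : SimpleGraph (Fin m)) l).Adj u v → c u ≠ c v := by
  intro l
  induction l with
  | zero =>
    obtain ⟨c⟩ := hcol
    exact ⟨c, fun u v h => c.valid h⟩
  | succ k ih =>
    obtain ⟨c, hc⟩ := ih
    obtain ⟨c', hc', _⟩ :=
      corona_exists_balanced_coloring (V := coronaType α (Fin m) k)
        (coronaPow G (⊤ : SimpleGraph (Fin m)) k) m c hc
    exact ⟨c', hc'⟩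

lemma coronaBase_adj {α β : Type u} (G : SimpleGraph α) (H : SimpleGraph β) :
    ∀ l {u v : α}, G.Adj u v →
      (coronaPow G H l).Adj (coronaBase β l u) (coronaBase β l v)
  | 0, _, _, h => h
  | l + 1, u, v, h => coronaBase_adj G H l h

end Aux

/-- The Equitable Coloring Conjecture holds for `G ∘^l K_m` when `G` is
connected on at least two vertices and `χ(G) ≤ m+1`. -/
theorem ecc_coronaPow_completeGraph
    {α : Type} [Fintype α] (G : SimpleGraph α) (m l : ℕ)
    (hG : G.Connected) (hcard : 2 ≤ Fintype.card α) (hm : 1 ≤ m)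
    (hcol : G.Colorable (m + 1)) (hl : 1 ≤ l) :
    (coronaPow G (⊤ : SimpleGraph (Fin m)) l).equitableChromaticNumber ≤
      (coronaPow G (⊤ : SimpleGraph (Fin m)) l).maxDeg := by
  classical
  obtain ⟨k, rfl⟩ : ∃ k, l = k + 1 := ⟨l - 1, by omega⟩
  -- Step 1: equitable (m+1)-colorability
  obtain ⟨c, hc⟩ := coronaPow_exists_proper G m hcol k
  obtain ⟨c', hc', hbal⟩ :=
    corona_exists_balanced_coloring (V := coronaType α (Fin m) k)
      (coronaPow G (⊤ : SimpleGraph (Fin m)) k) m c hc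
  have hEq : (coronaPow G (⊤ : SimpleGraph (Fin m)) (k + 1)).EquitablyColorable (m + 1) := by
    exact ⟨c', hc', fun i j => ((hbal i).trans (hbal j).symm).le.trans (Nat.le_succ _)⟩
  have h1 : (coronaPow G (⊤ : SimpleGraph (Fin m)) (k + 1)).equitableChromaticNumber ≤ m + 1 :=
    Nat.sInf_le hEq
  -- Step 2: max degree at least m + 1
  obtain ⟨v₀, u₀, hadj⟩ : ∃ v u : α, G.Adj v u := by
    obtain ⟨a, b, hab⟩ := Fintype.exists_pair_of_one_lt_card (α := α) (by omega)
    obtain ⟨w⟩ := hG a b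
    cases w with
    | nil => exact absurd rfl hab
    | cons h _ => exact ⟨_, _, h⟩
  set x : coronaType α (Fin m) (k + 1) :=
    Sum.inl (coronaBase (Fin m) k v₀) with hx
  set S : Finset (coronaType α (Fin m) (k + 1)) :=
    insert (Sum.inl (coronaBase (Fin m) k u₀))
      (Finset.univ.image fun a : Fin m => Sum.inr (coronaBase (Fin m) k v₀, a)) with hS
  have hScard : S.card = m + 1 := by
    rw [hS]
    refine (Finset.card_insert_of_notMem ?_).trans ?_
    · intro h
      obtain ⟨a, _, ha⟩ := Finset.mem_image.mp h
      exact Sum.inr_ne_inl ha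
    · exact (congrArg (· + 1) (Finset.card_image_of_injective (β := coronaType α (Fin m) (k + 1))
        (s := Finset.univ)
        (fun a b hab' => (Prod.mk.inj (Sum.inr.inj hab')).2))).trans (by simp)
  have hSsub : (S : Set (coronaType α (Fin m) (k + 1))) ⊆
      (coronaPow G (⊤ : SimpleGraph (Fin m)) (k + 1)).neighborSet x := by
    intro y hy
    have hy0 : y ∈ S := Finset.mem_coe.mp hy
    rw [hS] at hy0
    rcases Finset.mem_insert.mp hy0 with rfl | hy'
    · exact coronaBase_adj G (⊤ : SimpleGraph (Fin m)) k hadj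
    · obtain ⟨a, _, rfl⟩ := Finset.mem_image.mp hy'
      exact rfl
  have h2 : m + 1 ≤ (coronaPow G (⊤ : SimpleGraph (Fin m)) (k + 1)).maxDeg := by
    have hle : (S : Set _).ncard ≤
        ((coronaPow G (⊤ : SimpleGraph (Fin m)) (k + 1)).neighborSet x).ncard :=
      Set.ncard_le_ncard hSsub (Set.toFinite _)
    rw [Set.ncard_coe_finset, hScard] at hle
    unfold SimpleGraph.maxDeg
    exact hle.trans (Finset.le_sup (f := fun v => ((coronaPow G (⊤ : SimpleGraph (Fin m)) (k + 1)).neighborSet v).ncard) (Finset.mem_univ x))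
  omega
end

section
/- Let G be a graph with chromatic number χ(G) ≤ m+1 and let H be any graph on m vertices. Then for every l ≥ 1, the equitable chromatic number of the l-fold corona satisfies χ_=(G ∘^l H) ≤ m+1. -/
open SimpleGraph Finset

universe u

lemma corona_color_step {A β : Type} [Fintype A] [Fintype β]
    (G' : SimpleGraph A) (H : SimpleGraph β) (m : ℕ) (hm : Fintype.card β = m)
    (c : A → Fin (m + 1)) (hc : ∀ ⦃u v⦄, G'.Adj u v → c u ≠ c v) :
    ∃ c' : (A ⊕ A × β) → Fin (m + 1),
      (∀ ⦃u v⦄, (G'.corona H).Adj u v → c' u ≠ c' v) ∧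
      ∀ j : Fin (m + 1),
        (Finset.univ.filter fun x => c' x = j).card = Fintype.card A := by
  have hcard : ∀ i : Fin (m + 1),
      Fintype.card {j : Fin (m + 1) // j ≠ i} = Fintype.card β := by
    intro i
    rw [hm]
    simp [Fintype.card_subtype_compl]
  let e : ∀ i : Fin (m + 1), β ≃ {j : Fin (m + 1) // j ≠ i} :=
    fun i => (Fintype.equivOfCardEq (hcard i)).symm
  refine ⟨Sum.elim c (fun p => (e (c p.1) p.2).1), ?_, ?_⟩
  · rintro (u | ⟨u, a⟩) (v | ⟨v, b⟩) h
    · exact hc h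
    · obtain rfl := h
      exact Ne.symm (e (c u) b).2
    · obtain rfl := h
      exact (e (c u) a).2
    · obtain ⟨rfl, hab⟩ := h
      intro heq
      exact H.ne_of_adj hab ((e (c u)).injective (Subtype.coe_injective heq))
  · intro j
    rw [(Fintype.card_subtype _).symm]
    refine Fintype.card_congr (Equiv.symm ⟨?_, fun x => Sum.elim id Prod.fst x.1, ?_, ?_⟩)
    · intro u
      by_cases h : c u = j
      · exact ⟨Sum.inl u, h⟩
      · exact ⟨Sum.inr (u, (e (c u)).symm ⟨j, Ne.symm h⟩), by
          simp [Equiv.apply_symm_apply]⟩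
    · intro u
      by_cases h : c u = j <;> simp [h]
    · rintro ⟨x, hx⟩
      cases x with
      | inl u =>
        have h : c u = j := hx
        simp [h]
      | inr p =>
        obtain ⟨u, b⟩ := p
        have hx' : (e (c u) b).1 = j := hx
        have hne : ¬ c u = j := fun h => (e (c u) b).2 (hx'.trans h.symm)
        have hb : (e (c u)).symm ⟨j, Ne.symm hne⟩ = b := by
          have h2 : (⟨j, Ne.symm hne⟩ : {j' : Fin (m + 1) // j' ≠ c u}) = e (c u) b :=
            Subtype.ext hx'.symm
          rw [h2, Equiv.symm_apply_apply]
        simp only [Sum.elim_inr]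
        refine (dif_neg hne).trans ?_
        refine Subtype.ext ?_
        show (Sum.inr (u, (e (c u)).symm ⟨j, Ne.symm hne⟩) : A ⊕ A × β) = Sum.inr (u, b)
        rw [hb]

/-- If `χ(G) ≤ m+1` and `H` has `m` vertices then
`χ₌(G ∘^l H) ≤ m+1` for all `l ≥ 1`. -/
theorem equitableChromaticNumber_coronaPow_le
    {α β : Type} [Fintype α] [Fintype β] (G : SimpleGraph α) (H : SimpleGraph β)
    (m l : ℕ) (hm : Fintype.card β = m) (hG : G.Colorable (m + 1)) (hl : 1 ≤ l) :
    (coronaPow G H l).equitableChromaticNumber ≤ m + 1 := by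
  obtain ⟨l', rfl⟩ : ∃ l', l = l' + 1 := ⟨l - 1, by omega⟩
  have key : ∀ k, ∃ c : coronaType α β k → Fin (m + 1),
      ∀ ⦃u v⦄, (coronaPow G H k).Adj u v → c u ≠ c v := by
    intro k
    induction k with
    | zero =>
      obtain ⟨c⟩ := hG
      exact ⟨c, fun u v h => c.valid h⟩
    | succ k ih =>
      obtain ⟨c, hc⟩ := ih
      obtain ⟨c', hc', -⟩ := corona_color_step (coronaPow G H k) H m hm c hc
      exact ⟨c', hc'⟩
  obtain ⟨c, hc⟩ := key l'
  obtain ⟨c', hc', hcount⟩ := corona_color_step (coronaPow G H l') H m hm c hc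
  apply Nat.sInf_le
  exact ⟨c', hc', fun i j =>
    (hcount i).trans_le ((hcount j).ge.trans (Nat.le_succ _))⟩
end

section
/- Let G be an equitably k-colorable graph on n vertices with k dividing n, and let H be a (k−1)-partite graph. Then for every l ≥ 1, χ_=(G ∘^l H) ≤ k. -/
open SimpleGraph Finset

universe u

lemma mod_small (x k : ℕ) (h : x < 2*k) : x % k = if x < k then x else x - k := by
  split
  · exact Nat.mod_eq_of_lt ‹_›
  · rw [Nat.mod_eq_sub_mod (by omega), Nat.mod_eq_of_lt (by omega)]

def shiftColor {k : ℕ} (j : Fin k) (q : Fin (k - 1)) : Fin k :=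
  ⟨(j.val + q.val + 1) % k, Nat.mod_lt _ j.pos⟩

def unshift {k : ℕ} (i : Fin k) (q : Fin (k - 1)) : Fin k :=
  ⟨(i.val + k - q.val - 1) % k, Nat.mod_lt _ i.pos⟩

lemma shiftColor_ne {k : ℕ} (j : Fin k) (q : Fin (k - 1)) : shiftColor j q ≠ j := by
  have hk := j.pos
  have hq := q.isLt
  have hj := j.isLt
  intro h
  have h' : (j.val + q.val + 1) % k = j.val := congrArg Fin.val h
  rw [mod_small _ _ (by omega)] at h'
  split at h' <;> omega

lemma shiftColor_injq {k : ℕ} (j : Fin k) {q q' : Fin (k-1)}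
    (h : shiftColor j q = shiftColor j q') : q = q' := by
  have hk := j.pos
  have hq := q.isLt
  have hq' := q'.isLt
  have hj := j.isLt
  have h' : (j.val + q.val + 1) % k = (j.val + q'.val + 1) % k := congrArg Fin.val h
  rw [mod_small _ _ (by omega), mod_small _ _ (by omega)] at h'
  apply Fin.ext
  split at h' <;> split at h' <;> omega

lemma shiftColor_eq_iff {k : ℕ} (j i : Fin k) (q : Fin (k-1)) :
    shiftColor j q = i ↔ j = unshift i q := by
  have hk := j.pos
  have hq := q.isLt
  have hj := j.isLt
  have hi := i.isLt
  rw [Fin.ext_iff, Fin.ext_iff]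
  show (j.val + q.val + 1) % k = i.val ↔ j.val = (i.val + k - q.val - 1) % k
  rw [mod_small _ _ (by omega), mod_small _ _ (by omega)]
  split <;> split <;> omega

lemma card_filter_sum {V W : Type*} [Fintype V] [Fintype W]
    (p : V ⊕ W → Prop) [DecidablePred p] :
    (univ.filter p).card =
      (univ.filter fun v => p (Sum.inl v)).card + (univ.filter fun w => p (Sum.inr w)).card := by
  have : univ.filter p =
      ((univ.filter fun v => p (Sum.inl v)).disjSum (univ.filter fun w => p (Sum.inr w))) := by
    ext x
    cases x <;> simp [Finset.mem_disjSum]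
  rw [this, Finset.card_disjSum]

lemma card_filter_prod {V W : Type*} [Fintype V] [Fintype W] [DecidableEq W]
    (p : V × W → Prop) [DecidablePred p] :
    (univ.filter p).card = ∑ w : W, (univ.filter fun v => p (v, w)).card := by
  rw [Finset.card_eq_sum_card_fiberwise (f := Prod.snd) (t := univ) (fun x _ => mem_univ _)]
  refine Finset.sum_congr rfl fun w _ => ?_
  rw [Finset.filter_filter]
  refine Finset.card_bij' (fun x _ => x.1) (fun v _ => (v, w)) ?_ ?_ ?_ ?_ <;>
    simp +contextual [eq_comm]

lemma eq_classes {k : ℕ} (s : Fin k → ℕ) (h1 : ∀ i j, s i ≤ s j + 1)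
    (h2 : k ∣ ∑ i, s i) : ∀ i j, s i = s j := by
  intro i j
  by_contra hne
  wlog hlt : s j < s i generalizing i j
  · exact this j i (Ne.symm hne) ((h1 i j).lt_of_ne (by omega) |> fun h => by omega)
  have hij : s i = s j + 1 := by have := h1 i j; omega
  have hbound : ∀ t, s j ≤ s t ∧ s t ≤ s j + 1 := fun t => ⟨by have := h1 i t; omega, h1 t j⟩
  set T := univ.filter (fun t => s t = s j + 1) with hT
  have hsum : ∑ t, s t = k * s j + T.card := by
    have : ∀ t : Fin k, s t = s j + (if s t = s j + 1 then 1 else 0) := by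
      intro t; have := hbound t; split <;> omega
    rw [Finset.sum_congr rfl (fun t _ => this t), Finset.sum_add_distrib,
      Finset.sum_const, Finset.sum_boole]
    simp [hT, mul_comm]
  have hdT : k ∣ T.card := (Nat.dvd_add_right ⟨s j, by ring⟩).mp (hsum ▸ h2)
  have hjT : j ∉ T := by simp [hT]
  have hiT : i ∈ T := by simp [hT, hij]
  have hcard : T.card < k := by
    have h' : T ⊂ univ := Finset.ssubset_univ_iff.mpr (fun h => hjT (h ▸ Finset.mem_univ j))
    simpa using Finset.card_lt_card h'
  have h0 : 0 < T.card := Finset.card_pos.mpr ⟨i, hiT⟩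
  have := Nat.le_of_dvd h0 hdT
  omega

open SimpleGraph Finset in
lemma strong_corona {V β : Type u} [Fintype V] [Fintype β]
    {G : SimpleGraph V} {H : SimpleGraph β} {k : ℕ}
    (c : V → Fin k)
    (hc1 : ∀ ⦃u v⦄, G.Adj u v → c u ≠ c v)
    (hc2 : ∀ i j : Fin k,
      (univ.filter fun v => c v = i).card = (univ.filter fun v => c v = j).card)
    (cH : β → Fin (k-1)) (hcH : ∀ ⦃a b⦄, H.Adj a b → cH a ≠ cH b) :
    ∃ C : V ⊕ V × β → Fin k,
      (∀ ⦃u v⦄, (G.corona H).Adj u v → C u ≠ C v) ∧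
      ∀ i j : Fin k,
        (univ.filter fun v => C v = i).card = (univ.filter fun v => C v = j).card := by
  classical
  refine ⟨fun x => match x with
    | Sum.inl v => c v
    | Sum.inr (v, b) => shiftColor (c v) (cH b), ?_, ?_⟩
  · rintro (u | ⟨u, a⟩) (v | ⟨v, b⟩) h
    · exact hc1 h
    · rcases h with rfl
      exact fun h' => shiftColor_ne (c u) (cH b) h'.symm
    · rcases h with rfl
      exact fun h' => shiftColor_ne _ (cH a) h'
    · obtain ⟨rfl, hab⟩ := h
      exact fun h' => hcH hab (shiftColor_injq _ h')
  · have key : ∀ i : Fin k,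
        (univ.filter fun x : V ⊕ V × β => (match x with
          | Sum.inl v => c v
          | Sum.inr (v, b) => shiftColor (c v) (cH b)) = i).card =
        (univ.filter fun v => c v = i).card * (1 + Fintype.card β) := by
      intro i
      rw [card_filter_sum]
      have hprod : (univ.filter fun p : V × β => shiftColor (c p.1) (cH p.2) = i).card
          = ∑ _b : β, (univ.filter fun v => c v = i).card := by
        rw [card_filter_prod]
        refine Finset.sum_congr rfl fun b _ => ?_
        have : (univ.filter fun v => shiftColor (c v) (cH b) = i)
            = (univ.filter fun v => c v = unshift i (cH b)) := by
          apply Finset.filter_congr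
          intro v _
          exact_mod_cast shiftColor_eq_iff (c v) i (cH b)
        rw [this, hc2 (unshift i (cH b)) i]
      simp only [hprod, Finset.sum_const, Finset.card_univ, smul_eq_mul]
      ring
    intro i j
    rw [key i, key j, hc2 i j]

open SimpleGraph Finset in
lemma strong_coronaPow {α β : Type u} [Fintype α] [Fintype β]
    (G : SimpleGraph α) (H : SimpleGraph β) {k : ℕ}
    (c : α → Fin k)
    (hc1 : ∀ ⦃u v⦄, G.Adj u v → c u ≠ c v)
    (hc2 : ∀ i j : Fin k,
      (univ.filter fun v => c v = i).card = (univ.filter fun v => c v = j).card)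
    (cH : β → Fin (k-1)) (hcH : ∀ ⦃a b⦄, H.Adj a b → cH a ≠ cH b) :
    ∀ l, ∃ C : coronaType α β l → Fin k,
      (∀ ⦃u v⦄, (coronaPow G H l).Adj u v → C u ≠ C v) ∧
      ∀ i j : Fin k,
        (univ.filter fun v => C v = i).card = (univ.filter fun v => C v = j).card
  | 0 => ⟨c, hc1, hc2⟩
  | l + 1 => by
    obtain ⟨C, hC1, hC2⟩ := strong_coronaPow G H c hc1 hc2 cH hcH l
    exact strong_corona C hC1 hC2 cH hcH


/-- If `G` is equitably `k`-colorable on `n` vertices with `k ∣ n`, and `H`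
is `(k-1)`-partite, then `χ₌(G ∘^l H) ≤ k` for all `l ≥ 1`. -/
theorem equitableChromaticNumber_coronaPow_multipartite
    {α β : Type} [Fintype α] [Fintype β] (G : SimpleGraph α) (H : SimpleGraph β)
    (k n l : ℕ) (hn : Fintype.card α = n) (hG : G.EquitablyColorable k) (hdvd : k ∣ n)
    (hH : H.Colorable (k - 1)) (hl : 1 ≤ l) :
    (coronaPow G H l).equitableChromaticNumber ≤ k := by
  classical
  obtain ⟨c, hc1, hc2⟩ := hG
  have hsum : ∑ i : Fin k, (univ.filter fun v => c v = i).card = n := by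
    rw [← hn, ← Finset.card_univ,
      Finset.card_eq_sum_card_fiberwise (f := c) (t := univ) (fun x _ => mem_univ _)]
  have heq : ∀ i j : Fin k,
      (univ.filter fun v => c v = i).card = (univ.filter fun v => c v = j).card :=
    eq_classes _ hc2 (hsum ▸ hdvd)
  obtain ⟨cH⟩ := hH
  obtain ⟨C, hC1, hC2⟩ := strong_coronaPow G H c hc1 heq cH (fun _ _ h => cH.valid h) l
  exact Nat.sInf_le ⟨C, hC1, fun i j => (hC2 i j).le.trans (Nat.le_succ _)⟩
end

section
/- Let G be a graph on n vertices admitting an equitable k-coloring with k dividing n (so all k color classes of G have size n/k), and let H be a (k−1)-partite graph. Then the corona G ∘ H admits a strongly equitable k-coloring, i.e. a proper k-coloring in which each of the k color classes has exactly n(1+|V(H)|)/k vertices. -/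
open SimpleGraph Finset

universe u

/-- If `G` is equitably `k`-colorable on `n` vertices with `k ∣ n`, and `H`
is `(k-1)`-partite, then `G ∘ H` has a strongly equitable `k`-coloring: a proper
`k`-coloring all of whose color classes have exactly `n(1+|V(H)|)/k` vertices. -/
theorem corona_strongly_equitable
    {α β : Type} [Fintype α] [Fintype β] (G : SimpleGraph α) (H : SimpleGraph β)
    (k n : ℕ) (hn : Fintype.card α = n) (hG : G.EquitablyColorable k) (hdvd : k ∣ n)
    (hH : H.Colorable (k - 1)) :
    ∃ c : α ⊕ α × β → Fin k,
      (∀ ⦃u v⦄, (G.corona H).Adj u v → c u ≠ c v) ∧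
      ∀ i : Fin k,
        (Finset.univ.filter fun v => c v = i).card = n * (1 + Fintype.card β) / k := by
  classical
  obtain ⟨c, hc, hceq⟩ := hG
  rcases Nat.eq_zero_or_pos k with hk | hk
  · subst hk
    haveI : IsEmpty α := ⟨fun a => (c a).elim0⟩
    haveI : IsEmpty (α ⊕ α × β) := by
      constructor; rintro (u | ⟨u, b⟩) <;> exact isEmptyElim u
    exact ⟨fun x => isEmptyElim x, fun u v h => isEmptyElim u, fun i => i.elim0⟩
  haveI : NeZero k := ⟨hk.ne'⟩
  obtain ⟨d⟩ := hH
  set m := n / k with hm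
  have hkm : k * m = n := Nat.mul_div_cancel' hdvd
  -- every color class of `c` has size exactly `m = n / k`
  have hsum : ∑ j : Fin k, (univ.filter fun v => c v = j).card = n := by
    rw [← hn, ← Finset.card_univ,
      Finset.card_eq_sum_card_fiberwise (fun v _ => Finset.mem_univ (c v))]
  have hclass : ∀ i : Fin k, (univ.filter fun v => c v = i).card = m := by
    intro i
    have hsplit : (univ.filter fun v => c v = i).card
        + ∑ j ∈ univ.erase i, (univ.filter fun v => c v = j).card = k * m := by
      rw [Finset.add_sum_erase univ (fun j => (univ.filter fun v => c v = j).card)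
        (Finset.mem_univ i), hsum, hkm]
    have hcard : (univ.erase i).card = k - 1 := by
      rw [Finset.card_erase_of_mem (Finset.mem_univ i)]; simp
    have hkk : (k - 1) * m + m = k * m := by
      cases k with
      | zero => omega
      | succ k' => simp [Nat.succ_sub_one, Nat.succ_mul]
    by_contra hne
    rcases Nat.lt_or_ge (univ.filter fun v => c v = i).card m with hlt | hge
    · have hub : ∀ j ∈ univ.erase i, (univ.filter fun v => c v = j).card ≤ m :=
        fun j _ => by have := hceq j i; omega
      have h2 := Finset.sum_le_card_nsmul (univ.erase i)
        (fun j => (univ.filter fun v => c v = j).card) m hub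
      rw [hcard, smul_eq_mul] at h2
      omega
    · have hgt : m < (univ.filter fun v => c v = i).card :=
        lt_of_le_of_ne hge (Ne.symm hne)
      have hlb : ∀ j ∈ univ.erase i, m ≤ (univ.filter fun v => c v = j).card :=
        fun j _ => by have := hceq i j; omega
      have h2 := Finset.card_nsmul_le_sum (univ.erase i)
        (fun j => (univ.filter fun v => c v = j).card) m hlb
      rw [hcard, smul_eq_mul] at h2
      omega
  -- the shifted coloring
  have hfb : ∀ b : β, ((d b : Fin (k - 1)) : ℕ) + 1 < k := fun b => by
    have := (d b).isLt; omega
  set f : β → Fin k := fun b => ⟨(d b : Fin (k - 1)) + 1, hfb b⟩ with hf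
  have hf0 : ∀ b, f b ≠ 0 := fun b => by
    simp only [hf, Ne, Fin.ext_iff, Fin.val_zero]
    omega
  have hfinj : ∀ a b, H.Adj a b → f a ≠ f b := by
    intro a b hab he
    have : (d a : Fin (k-1)) = d b := by
      have := Fin.val_eq_of_eq he
      simp only [hf] at this
      exact Fin.ext (by omega)
    exact d.valid hab this
  refine ⟨Sum.elim c (fun ub => c ub.1 + f ub.2), ?_, ?_⟩
  · rintro (u | ⟨u, a⟩) (v | ⟨v, b⟩) h
    · exact hc h
    · obtain rfl : u = v := h
      simp only [Sum.elim_inl, Sum.elim_inr, Ne, left_eq_add]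
      exact hf0 b
    · obtain rfl : u = v := h
      simp only [Sum.elim_inl, Sum.elim_inr, Ne, add_eq_left]
      exact fun he => hf0 a he
    · obtain ⟨rfl, hab⟩ := h
      simp only [Sum.elim_inr, Ne, add_right_inj]
      exact hfinj a b hab
  · intro i
    set c' : α ⊕ α × β → Fin k := Sum.elim c (fun ub => c ub.1 + f ub.2) with hc'
    have hL : (univ.filter fun v => c' v = i).toLeft = univ.filter fun u => c u = i := by
      ext u; simp [hc']
    have hR : (univ.filter fun v => c' v = i).toRight =
        univ.filter fun ub : α × β => c ub.1 + f ub.2 = i := by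
      ext ub; simp [hc']
    have hcardsplit := Finset.card_toLeft_add_card_toRight
      (u := univ.filter fun v => c' v = i)
    rw [hL, hR] at hcardsplit
    -- count the right part fiberwise over β
    have hfiber : ∀ b : β, ((univ.filter fun ub : α × β => c ub.1 + f ub.2 = i).filter
        fun ub : α × β => ub.2 = b).card = m := by
      intro b
      have hbij : ((univ.filter fun ub : α × β => c ub.1 + f ub.2 = i).filter
          fun ub : α × β => ub.2 = b) =
          (univ.filter fun u : α => c u = i - f b).map
            ⟨fun u => (u, b), fun u₁ u₂ h => by simpa using congrArg Prod.fst h⟩ := by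
        ext ⟨u', b'⟩
        simp only [Finset.mem_filter, Finset.mem_univ, true_and, Finset.mem_map,
          Function.Embedding.coeFn_mk, Prod.mk.injEq]
        constructor
        · rintro ⟨h1, rfl⟩
          exact ⟨u', by rw [eq_sub_iff_add_eq]; exact h1, rfl⟩
        · rintro ⟨u, hu, rfl, rfl⟩
          exact ⟨by rw [← eq_sub_iff_add_eq]; exact hu, rfl⟩
      rw [hbij, Finset.card_map, hclass]
    have hRcard : (univ.filter fun ub : α × β => c ub.1 + f ub.2 = i).card =
        Fintype.card β * m := by
      rw [Finset.card_eq_sum_card_fiberwise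
        (f := fun ub : α × β => ub.2) (t := univ) (fun ub _ => Finset.mem_univ _)]
      rw [Finset.sum_congr rfl fun b _ => hfiber b]
      simp [Finset.card_univ, mul_comm]
    have : (univ.filter fun v => c' v = i).card = m + Fintype.card β * m := by
      rw [← hcardsplit, hclass i, hRcard]
    rw [this]
    have : n * (1 + Fintype.card β) = (m + Fintype.card β * m) * k := by
      rw [← hkm]; ring
    rw [this, Nat.mul_div_cancel _ hk]
end

section
/- For every integer m ≥ 3, the equitable chromatic number of the corona of the single-vertex graph K_1 with the cycle C_m satisfies: χ_=(K_1 ∘ C_m) = 4 if m = 3, and χ_=(K_1 ∘ C_m) = ⌈m/2⌉ + 1 if m > 3. -/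
open SimpleGraph Finset

universe u

instance coronaAdjDec {α β : Type*} (G : SimpleGraph α) (H : SimpleGraph β) [DecidableEq α]
    [DecidableRel G.Adj] [DecidableRel H.Adj] : DecidableRel (G.corona H).Adj := fun x y =>
  match x, y with
  | Sum.inl u, Sum.inl v => inferInstanceAs (Decidable (G.Adj u v))
  | Sum.inl u, Sum.inr (v, _) => inferInstanceAs (Decidable (u = v))
  | Sum.inr (u, _), Sum.inl v => inferInstanceAs (Decidable (u = v))
  | Sum.inr (u, a), Sum.inr (v, b) => inferInstanceAs (Decidable (u = v ∧ H.Adj a b))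

instance isEqColDec {V : Type*} [Fintype V] [DecidableEq V] (G : SimpleGraph V)
    [DecidableRel G.Adj] {k : ℕ} (c : V → Fin k) : Decidable (G.IsEquitableColoring c) :=
  inferInstanceAs (Decidable ((∀ u v, G.Adj u v → c u ≠ c v) ∧ ∀ i j : Fin k,
      (Finset.univ.filter fun v => c v = i).card ≤
        (Finset.univ.filter fun v => c v = j).card + 1))

instance eqColDec {V : Type*} [Fintype V] [DecidableEq V] (G : SimpleGraph V)
    [DecidableRel G.Adj] (k : ℕ) : Decidable (G.EquitablyColorable k) :=
  inferInstanceAs (Decidable (∃ c : V → Fin k, G.IsEquitableColoring c))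

theorem wheel_modsmall {h i : ℕ} (hi : i < 2 * h) :
    (i % h = i ∧ i < h) ∨ (i % h = i - h ∧ h ≤ i) := by
  rcases lt_or_ge i h with h1 | h1
  · exact Or.inl ⟨Nat.mod_eq_of_lt h1, h1⟩
  · exact Or.inr ⟨by rw [Nat.mod_eq_sub_mod h1, Nat.mod_eq_of_lt (by omega)], h1⟩

theorem wheel_cycle_adj_val {m : ℕ} (hm : 2 ≤ m) {u v : Fin m} :
    (cycleGraph m).Adj u v ↔ ((u.val + 1) % m = v.val ∨ (v.val + 1) % m = u.val) := by
  rw [cycleGraph_adj']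
  have hu := u.isLt
  have hv := v.isLt
  rw [Fin.sub_def, Fin.sub_def]
  simp only
  rcases wheel_modsmall (show m - v.val + u.val < 2 * m by omega) with ⟨e1, l1⟩ | ⟨e1, l1⟩ <;>
  rcases wheel_modsmall (show m - u.val + v.val < 2 * m by omega) with ⟨e2, l2⟩ | ⟨e2, l2⟩ <;>
  rcases wheel_modsmall (show u.val + 1 < 2 * m by omega) with ⟨e3, l3⟩ | ⟨e3, l3⟩ <;>
  rcases wheel_modsmall (show v.val + 1 < 2 * m by omega) with ⟨e4, l4⟩ | ⟨e4, l4⟩ <;>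
  rw [e1, e2, e3, e4] <;> omega

theorem wheel_lower {m k : ℕ} (hm : 3 ≤ m)
    (h : ((⊥ : SimpleGraph (Fin 1)).corona (cycleGraph m)).EquitablyColorable k) :
    (m + 1) / 2 + 1 ≤ k := by
  obtain ⟨c, hp, he⟩ := h
  set i0 := c (Sum.inl 0) with hi0
  have hk0 : 0 < k := i0.pos
  have hclass : (Finset.univ.filter fun v : Fin 1 ⊕ Fin 1 × Fin m => c v = i0)
      = {Sum.inl 0} := by
    ext v
    simp only [Finset.mem_filter, Finset.mem_univ, true_and, Finset.mem_singleton]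
    constructor
    · intro hv
      obtain (u | ⟨u, a⟩) := v
      · rw [Subsingleton.elim (0 : Fin 1) u]
      · have hadj : ((⊥ : SimpleGraph (Fin 1)).corona (cycleGraph m)).Adj
            (Sum.inl 0) (Sum.inr (u, a)) := Subsingleton.elim 0 u
        exact absurd hv.symm (hp hadj)
    · rintro rfl; rfl
  have hcard1 : (Finset.univ.filter fun v : Fin 1 ⊕ Fin 1 × Fin m => c v = i0).card = 1 := by
    rw [hclass]; exact Finset.card_singleton _
  have hle2 : ∀ j : Fin k, (Finset.univ.filter fun v => c v = j).card ≤ 2 := by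
    intro j
    have := he j i0
    omega
  have hsum : ∑ j : Fin k, (Finset.univ.filter fun v => c v = j).card = m + 1 := by
    rw [← Finset.card_eq_sum_card_fiberwise (fun v _ => Finset.mem_univ (c v))]
    simp only [Finset.card_univ, Fintype.card_sum, Fintype.card_prod, Fintype.card_fin]
    omega
  have hsplit : (Finset.univ.filter fun v : Fin 1 ⊕ Fin 1 × Fin m => c v = i0).card +
      ∑ j ∈ Finset.univ.erase i0, (Finset.univ.filter fun v => c v = j).card =
      ∑ j : Fin k, (Finset.univ.filter fun v => c v = j).card :=
    Finset.add_sum_erase Finset.univ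
      (fun j : Fin k => (Finset.univ.filter fun v => c v = j).card) (Finset.mem_univ i0)
  have hsum2 : ∑ j ∈ Finset.univ.erase i0, (Finset.univ.filter fun v => c v = j).card
      ≤ (Finset.univ.erase i0).card * 2 := by
    have := Finset.sum_le_card_nsmul (Finset.univ.erase i0)
      (fun j : Fin k => (Finset.univ.filter fun v => c v = j).card) 2
      (fun j _ => hle2 j)
    simpa using this
  have hcarde : ((Finset.univ : Finset (Fin k)).erase i0).card = k - 1 := by
    rw [Finset.card_erase_of_mem (Finset.mem_univ _), Finset.card_univ, Fintype.card_fin]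
  omega

theorem wheel_lower3 {k : ℕ}
    (h : ((⊥ : SimpleGraph (Fin 1)).corona (cycleGraph 3)).EquitablyColorable k) : 4 ≤ k := by
  obtain ⟨c, hp, -⟩ := h
  have hcy : ∀ a b : Fin 3, a ≠ b → (cycleGraph 3).Adj a b := by decide
  have hinj : Function.Injective c := by
    intro u v hc
    by_contra hne
    refine hp ?_ hc
    obtain (x | ⟨x, a⟩) := u <;> obtain (y | ⟨y, b⟩) := v
    · exact absurd (by rw [Subsingleton.elim x y]) hne
    · exact Subsingleton.elim x y
    · exact Subsingleton.elim x y
    · refine ⟨Subsingleton.elim x y, hcy a b ?_⟩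
      rintro rfl
      exact hne (by rw [Subsingleton.elim x y])
  have := Fintype.card_le_of_injective c hinj
  simpa using this

theorem wheel_upper {m : ℕ} (hm : 4 ≤ m) :
    ((⊥ : SimpleGraph (Fin 1)).corona (cycleGraph m)).EquitablyColorable ((m + 1) / 2 + 1) := by
  set h := (m + 1) / 2 with hh
  have h2 : 2 ≤ h := by omega
  have hmh : m ≤ 2 * h := by omega
  have hhm : 2 * h ≤ m + 1 := by omega
  have hhltm : h < m := by omega
  have hmpos : 0 < m := by omega
  refine ⟨Sum.elim (fun _ => ⟨h, by omega⟩)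
    (fun p => ⟨p.2.val % h, by have := Nat.mod_lt p.2.val (show 0 < h by omega); omega⟩),
    ?_, ?_⟩
  · rintro (u | ⟨u, a⟩) (v | ⟨v, b⟩) hadj
    · exact hadj.elim
    · intro hc
      have hc' : h = b.val % h := congrArg Fin.val hc
      have := Nat.mod_lt b.val (show 0 < h by omega)
      omega
    · intro hc
      have hc' : a.val % h = h := congrArg Fin.val hc
      have := Nat.mod_lt a.val (show 0 < h by omega)
      omega
    · obtain ⟨-, hab⟩ := hadj
      have hval := (wheel_cycle_adj_val (by omega)).mp hab
      intro hc
      have hc' : a.val % h = b.val % h := congrArg Fin.val hc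
      have ha := a.isLt
      have hb := b.isLt
      rcases wheel_modsmall (show a.val % h < 2 * h from by
        have := Nat.mod_lt a.val (show 0 < h by omega); omega) with _ | _
      all_goals
        rcases wheel_modsmall (show a.val < 2 * h by omega) with ⟨e1, l1⟩ | ⟨e1, l1⟩ <;>
        rcases wheel_modsmall (show b.val < 2 * h by omega) with ⟨e2, l2⟩ | ⟨e2, l2⟩ <;>
        rcases wheel_modsmall (show a.val + 1 < 2 * m by omega) with ⟨e3, l3⟩ | ⟨e3, l3⟩ <;>
        rcases wheel_modsmall (show b.val + 1 < 2 * m by omega) with ⟨e4, l4⟩ | ⟨e4, l4⟩ <;>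
        omega
  · have key : ∀ j : Fin (h + 1),
        1 ≤ (Finset.univ.filter fun v : Fin 1 ⊕ Fin 1 × Fin m =>
          Sum.elim (fun _ => (⟨h, by omega⟩ : Fin (h+1)))
            (fun p => ⟨p.2.val % h, by
              have := Nat.mod_lt p.2.val (show 0 < h by omega); omega⟩) v = j).card ∧
        (Finset.univ.filter fun v : Fin 1 ⊕ Fin 1 × Fin m =>
          Sum.elim (fun _ => (⟨h, by omega⟩ : Fin (h+1)))
            (fun p => ⟨p.2.val % h, by
              have := Nat.mod_lt p.2.val (show 0 < h by omega); omega⟩) v = j).card ≤ 2 := by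
      intro j
      have hjlt := j.isLt
      by_cases hj : j.val = h
      · constructor
        · refine Finset.card_pos.mpr ⟨Sum.inl 0, Finset.mem_filter.mpr ⟨Finset.mem_univ _, ?_⟩⟩
          exact Fin.ext (by simpa using hj.symm)
        · refine le_trans (Finset.card_le_card (fun v hv => ?_)) (by simp :
            ({Sum.inl 0} : Finset (Fin 1 ⊕ Fin 1 × Fin m)).card ≤ 2)
          rw [Finset.mem_filter] at hv
          rw [Finset.mem_singleton]
          obtain (u | ⟨u, a⟩) := v
          · rw [Subsingleton.elim (0 : Fin 1) u]
          · exfalso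
            have hva : a.val % h = j.val := congrArg Fin.val hv.2
            have := Nat.mod_lt a.val (show 0 < h by omega)
            omega
      · have hjh : j.val < h := by omega
        constructor
        · refine Finset.card_pos.mpr ⟨Sum.inr (0, ⟨j.val, by omega⟩),
            Finset.mem_filter.mpr ⟨Finset.mem_univ _, ?_⟩⟩
          exact Fin.ext (by simpa using Nat.mod_eq_of_lt hjh)
        · have hpair : ({Sum.inr (0, ⟨j.val, by omega⟩),
              Sum.inr (0, ⟨(j.val + h) % m, Nat.mod_lt _ hmpos⟩)} :
              Finset (Fin 1 ⊕ Fin 1 × Fin m)).card ≤ 2 :=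
            le_trans (Finset.card_insert_le _ _) (by simp)
          refine le_trans (Finset.card_le_card (fun v hv => ?_)) hpair
          rw [Finset.mem_filter] at hv
          rw [Finset.mem_insert, Finset.mem_singleton]
          obtain (u | ⟨u, a⟩) := v
          · exfalso
            have : h = j.val := congrArg Fin.val hv.2
            omega
          · have hva : a.val % h = j.val := congrArg Fin.val hv.2
            have ha := a.isLt
            have hu : u = 0 := Subsingleton.elim _ _
            rcases wheel_modsmall (show a.val < 2 * h by omega) with ⟨e1, l1⟩ | ⟨e1, l1⟩
            · left
              have ha' : a = (⟨j.val, by omega⟩ : Fin m) :=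
                Fin.ext (show a.val = j.val by omega)
              rw [hu, ha']
            · right
              have hjm : j.val + h < m := by omega
              have ha' : a = (⟨(j.val + h) % m, Nat.mod_lt _ hmpos⟩ : Fin m) :=
                Fin.ext (show a.val = (j.val + h) % m by rw [Nat.mod_eq_of_lt hjm]; omega)
              rw [hu, ha']
    intro i j
    have hi := key i
    have hj := key j
    omega

/-- `χ₌(K_1 ∘ C_m) = 4` if `m = 3` and `χ₌(K_1 ∘ C_m) = ⌈m/2⌉ + 1`
if `m > 3`. -/
theorem equitableChromaticNumber_wheel (m : ℕ) (hm : 3 ≤ m) :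
    (m = 3 →
      ((⊥ : SimpleGraph (Fin 1)).corona (cycleGraph m)).equitableChromaticNumber = 4) ∧
    (3 < m →
      ((⊥ : SimpleGraph (Fin 1)).corona (cycleGraph m)).equitableChromaticNumber =
        (m + 1) / 2 + 1) := by
  constructor
  · rintro rfl
    refine le_antisymm (Nat.sInf_le (by decide)) (le_csInf ⟨4, by decide⟩ ?_)
    exact fun k hk => wheel_lower3 hk
  · intro h4
    have h4' : 4 ≤ m := h4
    refine le_antisymm (Nat.sInf_le (wheel_upper h4')) (le_csInf ⟨_, wheel_upper h4'⟩ ?_)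
    exact fun k hk => wheel_lower hm hk
end

section
/- For every integer k ≥ 1, the graph K_1 ∘^2 C_{2k+1} has 4(k+1)^2 vertices and admits a strongly equitable 4-coloring, i.e. a proper 4-coloring in which each of the four color classes has exactly (k+1)^2 vertices; moreover χ_=(K_1 ∘^2 C_{2k+1}) = 4. -/
open SimpleGraph Finset

universe u

section CoronaAux

/-- colouring pattern on a cycle of length `2k+1`: alternating `A`,`B` with a final `C`. -/
def cpat (k : ℕ) (A B C : Fin 4) (i : Fin (2*k+1)) : Fin 4 :=
  if (i : ℕ) = 2*k then C else if (i : ℕ) % 2 = 0 then A else B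

/-- pattern used for a cycle attached to a vertex of colour `j`. -/
def cpatFor (k : ℕ) (j : Fin 4) : Fin (2*k+1) → Fin 4 :=
  if j = 0 then cpat k 1 2 3 else if j = 1 then cpat k 0 3 2
  else if j = 2 then cpat k 1 3 0 else cpat k 0 2 1

lemma cpat_ne (k : ℕ) {A B C X : Fin 4} (hA : A ≠ X) (hB : B ≠ X) (hC : C ≠ X)
    (i : Fin (2*k+1)) : cpat k A B C i ≠ X := by
  simp only [cpat]; split_ifs <;> assumption

lemma cpatFor_ne (k : ℕ) (j : Fin 4) (i : Fin (2*k+1)) : cpatFor k j i ≠ j := by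
  fin_cases j <;>
    exact cpat_ne k (by decide) (by decide) (by decide) i

lemma cpat_ne_three (k : ℕ) (i : Fin (2*k+1)) : cpat k 0 1 2 i ≠ 3 :=
  cpat_ne k (by decide) (by decide) (by decide) i

lemma cpat_proper {k : ℕ} (hk : 1 ≤ k) {A B C : Fin 4} (hAB : A ≠ B) (hAC : A ≠ C)
    (hBC : B ≠ C) {a b : Fin (2*k+1)} (hadj : (cycleGraph (2*k+1)).Adj a b) :
    cpat k A B C a ≠ cpat k A B C b := by
  have hBA := hAB.symm
  have hCA := hAC.symm
  have hCB := hBC.symm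
  have h1 : ((1 : Fin (2*k+1)) : ℕ) = 1 := by
    rw [Fin.val_one']; exact Nat.mod_eq_of_lt (by omega)
  rw [cycleGraph_adj'] at hadj
  have key : ∀ x y : Fin (2*k+1), ((x - y : Fin (2*k+1)) : ℕ) = 1 →
      cpat k A B C x ≠ cpat k A B C y := by
    intro x y hxy
    have hx : x = 1 + y := by
      have hs : x - y = 1 := Fin.ext (by rw [h1]; exact hxy)
      exact sub_eq_iff_eq_add.mp hs
    have hxv : (x : ℕ) = (1 + (y : ℕ)) % (2*k+1) := by
      rw [hx, Fin.val_add, h1]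
    have hylt : (y : ℕ) < 2*k+1 := y.isLt
    rcases Nat.lt_or_ge (y : ℕ) (2*k) with hy | hy
    · have hx' : (x : ℕ) = (y : ℕ) + 1 := by
        rw [hxv, Nat.mod_eq_of_lt (by omega)]; omega
      simp only [cpat]
      split_ifs <;> first | exact hAB | exact hBA | exact hAC | exact hCA | exact hBC | exact hCB | (exfalso; omega)
    · have hy' : (y : ℕ) = 2*k := by omega
      have hx' : (x : ℕ) = 0 := by
        rw [hxv, hy', show 1 + 2*k = 2*k+1 from by ring, Nat.mod_self]
      simp only [cpat]
      split_ifs <;> first | exact hAB | exact hBA | exact hAC | exact hCA | exact hBC | exact hCB | (exfalso; omega)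
  rcases hadj with h | h
  · exact key a b h
  · exact (key b a h).symm

lemma cpatFor_proper {k : ℕ} (hk : 1 ≤ k) (j : Fin 4) {a b : Fin (2*k+1)}
    (h : (cycleGraph (2*k+1)).Adj a b) : cpatFor k j a ≠ cpatFor k j b := by
  fin_cases j <;>
    exact cpat_proper hk (by decide) (by decide) (by decide) h

lemma sum_ite_parity (m s t : ℕ) :
    ∑ j ∈ Finset.range (2*m), (if j % 2 = 0 then s else t) = m*s + m*t := by
  induction m with
  | zero => simp
  | succ m ih =>
    have h2 : 2*(m+1) = (2*m)+1+1 := by ring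
    rw [h2, Finset.sum_range_succ, Finset.sum_range_succ, ih,
      if_pos (by omega : (2*m) % 2 = 0), if_neg (by omega : ¬ (2*m+1) % 2 = 0)]
    ring

lemma sum_range_pat (k s t u : ℕ) :
    ∑ j ∈ Finset.range (2*k+1), (if j = 2*k then u else if j % 2 = 0 then s else t)
      = k*s + k*t + u := by
  rw [Finset.sum_range_succ, if_pos rfl]
  congr 1
  rw [← sum_ite_parity k s t]
  refine Finset.sum_congr rfl fun j hj => ?_
  rw [Finset.mem_range] at hj
  rw [if_neg (by omega)]

lemma sum_cpat_comp (k : ℕ) (A B C : Fin 4) (f : Fin 4 → ℕ) :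
    ∑ i : Fin (2*k+1), f (cpat k A B C i) = k * f A + k * f B + f C := by
  have h : ∀ i : Fin (2*k+1),
      f (cpat k A B C i)
        = (fun j : ℕ => if j = 2*k then f C else if j % 2 = 0 then f A else f B) (i : ℕ) := by
    intro i; simp only [cpat, apply_ite f]
  have e : ∑ i : Fin (2*k+1), f (cpat k A B C i)
      = ∑ j ∈ Finset.range (2*k+1), (if j = 2*k then f C else if j % 2 = 0 then f A else f B) := by
    rw [← Fin.sum_univ_eq_sum_range]
    exact Finset.sum_congr rfl fun i _ => h i
  rw [e, sum_range_pat]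

lemma sum_cpat_ind (k : ℕ) (A B C X : Fin 4) :
    ∑ i : Fin (2*k+1), (if cpat k A B C i = X then 1 else 0)
      = k * (if A = X then 1 else 0) + k * (if B = X then 1 else 0)
        + (if C = X then 1 else 0) :=
  sum_cpat_comp k A B C (fun col => if col = X then 1 else 0)

end CoronaAux
section CoronaMain

abbrev V1 (k : ℕ) := Fin 1 ⊕ Fin 1 × Fin (2*k+1)
abbrev V2 (k : ℕ) := V1 k ⊕ V1 k × Fin (2*k+1)

def c1 (k : ℕ) : V1 k → Fin 4
  | .inl _ => 3
  | .inr (_, i) => cpat k 0 1 2 i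

def c2 (k : ℕ) : V2 k → Fin 4
  | .inl v => c1 k v
  | .inr (v, i) => cpatFor k (c1 k v) i

lemma c2_proper (k : ℕ) (hk : 1 ≤ k) :
    ∀ ⦃u v : V2 k⦄,
      (((⊥ : SimpleGraph (Fin 1)).corona (cycleGraph (2*k+1))).corona
        (cycleGraph (2*k+1))).Adj u v → c2 k u ≠ c2 k v := by
  rintro (v | ⟨v, a⟩) (w | ⟨w, b⟩) h
  · rcases v with v | ⟨v, a⟩ <;> rcases w with w | ⟨w, b⟩
    · exact absurd h (by simp [corona])
    · exact Ne.symm (cpat_ne_three k b)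
    · exact cpat_ne_three k a
    · exact cpat_proper hk (by decide) (by decide) (by decide) h.2
  · cases h
    exact fun hc => cpatFor_ne k (c1 k v) b hc.symm
  · cases h
    exact cpatFor_ne k (c1 k v) a
  · obtain ⟨rfl, hab⟩ := h
    exact cpatFor_proper hk (c1 k v) hab

/-- the number of colour-`X` vertices in a cycle attached to a vertex of colour `col`. -/
def Fcnt (k : ℕ) (X col : Fin 4) : ℕ :=
  ∑ i : Fin (2*k+1), (if cpatFor k col i = X then 1 else 0)

lemma count_main (k : ℕ) (X : Fin 4) :
    ((univ : Finset (V2 k)).filter fun v => c2 k v = X).card = (k+1)^2 := by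
  rw [Finset.card_filter, Fintype.sum_sum_type]
  have e1 : ∑ v : V1 k, (if c2 k (Sum.inl v) = X then 1 else 0)
      = (if (3 : Fin 4) = X then 1 else 0)
        + (k * (if (0 : Fin 4) = X then 1 else 0) + k * (if (1 : Fin 4) = X then 1 else 0)
          + (if (2 : Fin 4) = X then 1 else 0)) := by
    rw [Fintype.sum_sum_type, Fintype.sum_prod_type]
    simp only [c2, c1]
    rw [Fin.sum_univ_one, Fin.sum_univ_one]
    exact congrArg ((if (3 : Fin 4) = X then 1 else 0) + ·) (sum_cpat_ind k 0 1 2 X)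
  have e2 : ∑ p : V1 k × Fin (2*k+1), (if c2 k (Sum.inr p) = X then 1 else 0)
      = Fcnt k X 3 + (k * Fcnt k X 0 + k * Fcnt k X 1 + Fcnt k X 2) := by
    rw [Fintype.sum_prod_type, Fintype.sum_sum_type, Fintype.sum_prod_type]
    simp only [c2, c1]
    rw [Fin.sum_univ_one, Fin.sum_univ_one]
    exact congrArg (Fcnt k X 3 + ·) (sum_cpat_comp k 0 1 2 (Fcnt k X))
  rw [e1, e2]
  have hF0 : Fcnt k X 0 = k * (if (1:Fin 4) = X then 1 else 0)
      + k * (if (2:Fin 4) = X then 1 else 0) + (if (3:Fin 4) = X then 1 else 0) := by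
    rw [show Fcnt k X 0
      = ∑ i : Fin (2*k+1), (if cpat k 1 2 3 i = X then 1 else 0) from rfl, sum_cpat_ind]
  have hF1 : Fcnt k X 1 = k * (if (0:Fin 4) = X then 1 else 0)
      + k * (if (3:Fin 4) = X then 1 else 0) + (if (2:Fin 4) = X then 1 else 0) := by
    rw [show Fcnt k X 1
      = ∑ i : Fin (2*k+1), (if cpat k 0 3 2 i = X then 1 else 0) from rfl, sum_cpat_ind]
  have hF2 : Fcnt k X 2 = k * (if (1:Fin 4) = X then 1 else 0)
      + k * (if (3:Fin 4) = X then 1 else 0) + (if (0:Fin 4) = X then 1 else 0) := by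
    rw [show Fcnt k X 2
      = ∑ i : Fin (2*k+1), (if cpat k 1 3 0 i = X then 1 else 0) from rfl, sum_cpat_ind]
  have hF3 : Fcnt k X 3 = k * (if (0:Fin 4) = X then 1 else 0)
      + k * (if (2:Fin 4) = X then 1 else 0) + (if (1:Fin 4) = X then 1 else 0) := by
    rw [show Fcnt k X 3
      = ∑ i : Fin (2*k+1), (if cpat k 0 2 1 i = X then 1 else 0) from rfl, sum_cpat_ind]
  rw [hF0, hF1, hF2, hF3]
  fin_cases X <;> simp <;> ring

end CoronaMain
open Fin.NatCast in
lemma corona_lower_bound (k m : ℕ) (hk : 1 ≤ k) (c : V2 k → Fin m)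
    (hc : ∀ ⦃u v : V2 k⦄,
      (((⊥ : SimpleGraph (Fin 1)).corona (cycleGraph (2*k+1))).corona
        (cycleGraph (2*k+1))).Adj u v → c u ≠ c v) : 4 ≤ m := by
  haveI : NeZero (2*k+1) := ⟨by omega⟩
  set d : Fin (2*k+1) → Fin m := fun i => c (Sum.inr (Sum.inl 0, i)) with hdd
  have hroot : ∀ i, c (Sum.inl (Sum.inl 0)) ≠ d i := fun i => hc rfl
  have hd : ∀ a b, (cycleGraph (2*k+1)).Adj a b → d a ≠ d b := fun a b h => hc ⟨rfl, h⟩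
  have hone : ((1 : Fin (2*k+1)) : ℕ) = 1 := by
    rw [Fin.val_one']; exact Nat.mod_eq_of_lt (by omega)
  have hadj : ∀ u : Fin (2*k+1), (cycleGraph (2*k+1)).Adj u (u+1) := by
    intro u
    rw [cycleGraph_adj']
    right
    rw [add_sub_cancel_left]
    exact hone
  set e : ℕ → Fin m := fun j => d ((j : Fin (2*k+1))) with hee
  have he : ∀ j : ℕ, e (j+1) ≠ e j := by
    intro j
    have h := (hd _ _ (hadj ((j : ℕ) : Fin (2*k+1)))).symm
    simpa [hee, Nat.cast_add, Nat.cast_one] using h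
  by_cases h3 : ∃ i, d i ≠ e 0 ∧ d i ≠ e 1
  · obtain ⟨i, hi0, hi1⟩ := h3
    have h01 : e 0 ≠ e 1 := (he 0).symm
    have hr0 : c (Sum.inl (Sum.inl 0)) ≠ e 0 := hroot _
    have hr1 : c (Sum.inl (Sum.inl 0)) ≠ e 1 := hroot _
    have hri : c (Sum.inl (Sum.inl 0)) ≠ d i := hroot _
    have hcard : ({c (Sum.inl (Sum.inl 0)), e 0, e 1, d i} : Finset (Fin m)).card = 4 := by
      rw [Finset.card_insert_of_notMem (by simp [hr0, hr1, hri]),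
        Finset.card_insert_of_notMem (by simp [h01, hi0.symm]),
        Finset.card_insert_of_notMem (by simp [hi1.symm]),
        Finset.card_singleton]
    calc 4 = ({c (Sum.inl (Sum.inl 0)), e 0, e 1, d i} : Finset (Fin m)).card := hcard.symm
      _ ≤ (Finset.univ : Finset (Fin m)).card := Finset.card_le_univ _
      _ = m := by simp
  · push_neg at h3
    exfalso
    have key : ∀ j : ℕ, e j = (if j % 2 = 0 then e 0 else e 1) := by
      intro j
      induction j with
      | zero => simp
      | succ j ih =>
        have hne := he j
        have hcases : e (j+1) = e 0 ∨ e (j+1) = e 1 := by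
          by_cases h0 : e (j+1) = e 0
          · exact Or.inl h0
          · exact Or.inr (h3 _ h0)
        by_cases hpar : j % 2 = 0
        · rw [if_neg (by omega)]
          rw [if_pos hpar] at ih
          rcases hcases with h | h
          · exact absurd (h.trans ih.symm) hne
          · exact h
        · rw [if_pos (by omega)]
          rw [if_neg hpar] at ih
          rcases hcases with h | h
          · exact h
          · exact absurd (h.trans ih.symm) hne
    have h2k : e (2*k) = e 0 := by rw [key (2*k), if_pos (by omega)]
    have hlast : e (2*k+1) = e 0 := by
      have : ((2*k+1 : ℕ) : Fin (2*k+1)) = ((0 : ℕ) : Fin (2*k+1)) := by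
        simp [Fin.natCast_self]
      simp only [hee]
      rw [this]
    exact he (2*k) (by rw [hlast, h2k])

lemma filter_card_congr {α : Type*} (F1 F2 : Fintype α) (p : α → Prop) [DecidablePred p] :
    ((@Finset.univ α F1).filter p).card = ((@Finset.univ α F2).filter p).card := by
  rw [Subsingleton.elim F1 F2]

/-- `K_1 ∘² C_{2k+1}` has `4(k+1)²` vertices, admits a strongly equitable
4-coloring (proper, each class of size exactly `(k+1)²`), and
`χ₌(K_1 ∘² C_{2k+1}) = 4`. -/
theorem coronaPow_two_K1_oddCycle (k : ℕ) (hk : 1 ≤ k) :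
    Fintype.card (coronaType (Fin 1) (Fin (2 * k + 1)) 2) = 4 * (k + 1) ^ 2 ∧
    (∃ c : coronaType (Fin 1) (Fin (2 * k + 1)) 2 → Fin 4,
      (∀ ⦃u v⦄,
        (coronaPow (⊥ : SimpleGraph (Fin 1)) (cycleGraph (2 * k + 1)) 2).Adj u v →
          c u ≠ c v) ∧
      ∀ i : Fin 4, (Finset.univ.filter fun v => c v = i).card = (k + 1) ^ 2) ∧
    (coronaPow (⊥ : SimpleGraph (Fin 1))
      (cycleGraph (2 * k + 1)) 2).equitableChromaticNumber = 4 := by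
  have hproper : ∀ ⦃u v : coronaType (Fin 1) (Fin (2 * k + 1)) 2⦄,
      (coronaPow (⊥ : SimpleGraph (Fin 1)) (cycleGraph (2 * k + 1)) 2).Adj u v →
        c2 k u ≠ c2 k v := fun u v h => c2_proper k hk h
  refine ⟨?_, ⟨c2 k, hproper, fun i => count_main k i⟩, ?_⟩
  · have h := Fintype.card_eq.mpr ⟨Equiv.refl (V2 k)⟩
    rw [show Fintype.card (coronaType (Fin 1) (Fin (2 * k + 1)) 2)
        = Fintype.card (V2 k) from h]
    simp only [V2, V1, Fintype.card_sum, Fintype.card_prod, Fintype.card_fin]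
    ring
  · have hmem : (coronaPow (⊥ : SimpleGraph (Fin 1))
        (cycleGraph (2 * k + 1)) 2).EquitablyColorable 4 := by
      refine ⟨c2 k, hproper, fun i j => ?_⟩
      have hi := count_main k i
      have hj := count_main k j
      exact le_trans (le_of_eq hi)
        (le_trans (Nat.le_succ _) (Nat.add_le_add_right (le_of_eq hj.symm) 1))
    have hlow : ∀ m, (coronaPow (⊥ : SimpleGraph (Fin 1))
        (cycleGraph (2 * k + 1)) 2).EquitablyColorable m → 4 ≤ m := by
      rintro m ⟨c, hpc, -⟩
      exact corona_lower_bound k m hk c hpc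
    have h4 : 4 ∈ {m | (coronaPow (⊥ : SimpleGraph (Fin 1))
        (cycleGraph (2 * k + 1)) 2).EquitablyColorable m} := hmem
    exact le_antisymm (Nat.sInf_le h4) (hlow _ (Nat.sInf_mem ⟨4, h4⟩))
end

section
/- Let G be an equitably 3-colorable graph on n ≥ 2 vertices and let m ≥ 2 and l ≥ 2 be integers. If m = 4 or 3 divides n, then χ_=(G ∘^l P_m) = 3. -/
open SimpleGraph Finset

universe u

-- counting evens/odds in range
lemma range_filter_even_card (m : ℕ) :
    ((Finset.range m).filter (fun k => k % 2 = 0)).card = (m + 1) / 2 := by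
  induction m with
  | zero => simp
  | succ n ih =>
    rw [Finset.range_add_one, Finset.filter_insert]
    by_cases h : n % 2 = 0
    · rw [if_pos h, Finset.card_insert_of_notMem (by simp)]
      omega
    · rw [if_neg h]; omega

lemma range_filter_odd_card (m : ℕ) :
    ((Finset.range m).filter (fun k => ¬ k % 2 = 0)).card = m / 2 := by
  have h := Finset.card_filter_add_card_filter_not
    (s := Finset.range m) (p := fun k => k % 2 = 0)
  rw [range_filter_even_card, Finset.card_range] at h
  omega

def coronaColor {α : Type*} {m : ℕ} (c : α → Fin 3) :
    α ⊕ α × Fin m → Fin 3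
  | Sum.inl v => c v
  | Sum.inr (v, k) => c v + (if k.val % 2 = 0 then 2 else 1)

lemma coronaColor_proper {α : Type*} (G : SimpleGraph α) (m : ℕ) (c : α → Fin 3)
    (hc : ∀ ⦃u v⦄, G.Adj u v → c u ≠ c v) :
    ∀ ⦃x y : α ⊕ α × Fin m⦄, (G.corona (pathGraph m)).Adj x y →
      coronaColor c x ≠ coronaColor c y := by
  have key : ∀ x : Fin 3, x ≠ x + 2 ∧ x ≠ x + 1 ∧ x + 2 ≠ x + 1 ∧ x + 2 ≠ x
      ∧ x + 1 ≠ x ∧ x + 1 ≠ x + 2 := by decide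
  rintro (u | ⟨u, a⟩) (v | ⟨v, b⟩) h
  · exact hc h
  · obtain rfl : u = v := h
    simp only [coronaColor]
    split
    · exact (key (c u)).1
    · exact (key (c u)).2.1
  · obtain rfl : u = v := h
    simp only [coronaColor]
    split
    · exact (key (c u)).2.2.2.1
    · exact (key (c u)).2.2.2.2.1
  · obtain ⟨rfl, hab⟩ := h
    rw [pathGraph_adj] at hab
    have hpar : a.val % 2 = 0 ↔ ¬ b.val % 2 = 0 := by omega
    simp only [coronaColor]
    by_cases ha : a.val % 2 = 0 <;> by_cases hb : b.val % 2 = 0 <;>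
      simp only [ha, hb, if_true, if_false, if_pos, if_neg, not_false_iff] <;>
      first
        | exact absurd hb (hpar.mp ha)
        | exact absurd (hpar.mpr hb) ha
        | exact (key (c u)).2.2.1
        | exact (key (c u)).2.2.2.2.2

lemma coronaColor_card {α : Type*} [Fintype α] (m : ℕ) (c : α → Fin 3) (i : Fin 3) :
    (Finset.univ.filter fun x : α ⊕ α × Fin m => coronaColor c x = i).card
      = (Finset.univ.filter fun v => c v = i).card
        + (m + 1) / 2 * (Finset.univ.filter fun v => c v = i + 1).card
        + m / 2 * (Finset.univ.filter fun v => c v = i + 2).card := by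
  classical
  have key1 : ∀ x y : Fin 3, (x + 2 = y) = (x = y + 1) := by decide
  have key2 : ∀ x y : Fin 3, (x + 1 = y) = (x = y + 2) := by decide
  rw [Finset.card_filter, Fintype.sum_sum_type, Fintype.sum_prod_type]
  have inner : ∀ v : α,
      (∑ k : Fin m, if coronaColor c (Sum.inr (v, k)) = i then 1 else 0)
        = (m + 1) / 2 * (if c v = i + 1 then 1 else 0)
          + m / 2 * (if c v = i + 2 then 1 else 0) := by
    intro v
    have e1 : (∑ k : Fin m, if coronaColor c (Sum.inr (v, k)) = i then 1 else 0)
        = ∑ t ∈ Finset.range m, if t % 2 = 0 then (if c v = i + 1 then 1 else 0)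
            else (if c v = i + 2 then 1 else 0) := by
      rw [← Fin.sum_univ_eq_sum_range (fun t =>
        if t % 2 = 0 then (if c v = i + 1 then (1:ℕ) else 0)
          else (if c v = i + 2 then 1 else 0)) m]
      refine Finset.sum_congr rfl fun k _ => ?_
      simp only [coronaColor]
      by_cases hk : (k : ℕ) % 2 = 0
      · simp only [hk, if_true, key1]
      · simp only [hk, if_false, key2]
    rw [e1, Finset.sum_ite, Finset.sum_const, Finset.sum_const,
      range_filter_even_card, range_filter_odd_card, smul_eq_mul, smul_eq_mul]
  have outer : (∑ v : α, ∑ k : Fin m, if coronaColor c (Sum.inr (v, k)) = i then 1 else 0)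
      = (m + 1) / 2 * (Finset.univ.filter fun v => c v = i + 1).card
        + m / 2 * (Finset.univ.filter fun v => c v = i + 2).card := by
    rw [Finset.sum_congr rfl fun v _ => inner v, Finset.sum_add_distrib,
      ← Finset.mul_sum, ← Finset.mul_sum, Finset.card_filter, Finset.card_filter]
  rw [outer, ← Finset.card_filter]
  have efil : (Finset.univ.filter fun v : α => coronaColor (m := m) c (Sum.inl v) = i)
      = Finset.univ.filter (fun v => c v = i) := rfl
  rw [efil]
  ring

lemma equit_step_four {α : Type*} [Fintype α] (G : SimpleGraph α)
    (h : G.EquitablyColorable 3) :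
    (G.corona (pathGraph 4)).EquitablyColorable 3 := by
  obtain ⟨c, hc, hcnt⟩ := h
  refine ⟨coronaColor c, fun u v hadj => coronaColor_proper G 4 c hc hadj, ?_⟩
  intro i j
  rw [coronaColor_card, coronaColor_card]
  have h01 := hcnt 0 1
  have h10 := hcnt 1 0
  have h02 := hcnt 0 2
  have h20 := hcnt 2 0
  have h12 := hcnt 1 2
  have h21 := hcnt 2 1
  have e3 : ∀ t : Fin 3, t = 0 ∨ t = 1 ∨ t = 2 := by decide
  rcases e3 i with rfl | rfl | rfl <;> rcases e3 j with rfl | rfl | rfl <;>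
    simp only [show ((0:Fin 3)+1) = 1 from rfl, show ((0:Fin 3)+2) = 2 from rfl,
      show ((1:Fin 3)+1) = 2 from rfl, show ((1:Fin 3)+2) = 0 from rfl,
      show ((2:Fin 3)+1) = 0 from rfl, show ((2:Fin 3)+2) = 1 from rfl] <;>
    omega

lemma balanced_step {α : Type*} [Fintype α] (G : SimpleGraph α) (m : ℕ)
    (h : ∃ c : α → Fin 3, (∀ ⦃u v⦄, G.Adj u v → c u ≠ c v) ∧
      ∀ i j : Fin 3, (Finset.univ.filter fun v => c v = i).card
        = (Finset.univ.filter fun v => c v = j).card) :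
    ∃ c : α ⊕ α × Fin m → Fin 3,
      (∀ ⦃u v⦄, (G.corona (pathGraph m)).Adj u v → c u ≠ c v) ∧
      ∀ i j : Fin 3, (Finset.univ.filter fun v => c v = i).card
        = (Finset.univ.filter fun v => c v = j).card := by
  obtain ⟨c, hc, hcnt⟩ := h
  refine ⟨coronaColor c, fun u v hadj => coronaColor_proper G m c hc hadj, ?_⟩
  intro i j
  rw [coronaColor_card, coronaColor_card, hcnt i 0, hcnt (i+1) 0, hcnt (i+2) 0,
    hcnt j 0, hcnt (j+1) 0, hcnt (j+2) 0]

lemma coronaPow_equit_four {α : Type} [Fintype α] (G : SimpleGraph α)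
    (h : G.EquitablyColorable 3) (l : ℕ) :
    (coronaPow G (pathGraph 4) l).EquitablyColorable 3 := by
  induction l with
  | zero => exact h
  | succ k ih => exact equit_step_four _ ih

lemma coronaPow_balanced {α : Type} [Fintype α] (G : SimpleGraph α) (m : ℕ)
    (h : ∃ c : α → Fin 3, (∀ ⦃u v⦄, G.Adj u v → c u ≠ c v) ∧
      ∀ i j : Fin 3, (Finset.univ.filter fun v => c v = i).card
        = (Finset.univ.filter fun v => c v = j).card) (l : ℕ) :
    ∃ c : coronaType α (Fin m) l → Fin 3,
      (∀ ⦃u v⦄, (coronaPow G (pathGraph m) l).Adj u v → c u ≠ c v) ∧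
      ∀ i j : Fin 3, (Finset.univ.filter fun v => c v = i).card
        = (Finset.univ.filter fun v => c v = j).card := by
  induction l with
  | zero => exact h
  | succ k ih => exact balanced_step _ m ih

lemma count_sum_three {α : Type} [Fintype α] (c : α → Fin 3) :
    (Finset.univ.filter fun v => c v = 0).card
      + (Finset.univ.filter fun v => c v = 1).card
      + (Finset.univ.filter fun v => c v = 2).card = Fintype.card α := by
  classical
  rw [Finset.card_filter, Finset.card_filter, Finset.card_filter,
    ← Finset.sum_add_distrib, ← Finset.sum_add_distrib]
  rw [show (Fintype.card α) = ∑ _v : α, 1 from by simp]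
  refine Finset.sum_congr rfl fun v _ => ?_
  have : ∀ x : Fin 3, ((if x = 0 then 1 else 0) + (if x = 1 then 1 else 0))
      + (if x = 2 then 1 else 0) = 1 := by decide
  exact this (c v)

lemma three_le_of_equit {V : Type} [Fintype V] (K : SimpleGraph V) {k : ℕ}
    (x y z : V) (hxy : K.Adj x y) (hxz : K.Adj x z) (hyz : K.Adj y z)
    (h : K.EquitablyColorable k) : 3 ≤ k := by
  obtain ⟨c, hc, -⟩ := h
  have hinj : Function.Injective ![c x, c y, c z] := by
    intro i j hij
    fin_cases i <;> fin_cases j <;>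
      simp_all [Matrix.cons_val_zero, Matrix.cons_val_one] <;>
      first
        | rfl
        | exact absurd hij (hc hxy)
        | exact absurd hij (hc hxz)
        | exact absurd hij (hc hyz)
        | exact absurd hij.symm (hc hxy)
        | exact absurd hij.symm (hc hxz)
        | exact absurd hij.symm (hc hyz)
  simpa using Fintype.card_le_of_injective _ hinj


/-- If `G` is equitably 3-colorable on `n ≥ 2` vertices, `m ≥ 2`, `l ≥ 2`,
and `m = 4` or `3 ∣ n`, then `χ₌(G ∘^l P_m) = 3`. -/
theorem equitableChromaticNumber_coronaPow_path_eq_three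
    {α : Type} [Fintype α] (G : SimpleGraph α) (n m l : ℕ)
    (hn : Fintype.card α = n) (hn2 : 2 ≤ n) (hG : G.EquitablyColorable 3)
    (hm : 2 ≤ m) (hl : 2 ≤ l) (h : m = 4 ∨ 3 ∣ n) :
    (coronaPow G (pathGraph m) l).equitableChromaticNumber = 3 := by
  classical
  -- upper bound: the graph is equitably 3-colorable
  have hup : (coronaPow G (pathGraph m) l).EquitablyColorable 3 := by
    rcases h with rfl | hdvd
    · exact coronaPow_equit_four G hG l
    · -- balanced case
      obtain ⟨c, hc, hcnt⟩ := hG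
      have hsum := count_sum_three c
      rw [hn] at hsum
      have hbal : ∀ i j : Fin 3, (Finset.univ.filter fun v => c v = i).card
          = (Finset.univ.filter fun v => c v = j).card := by
        have h01 := hcnt 0 1
        have h10 := hcnt 1 0
        have h02 := hcnt 0 2
        have h20 := hcnt 2 0
        have h12 := hcnt 1 2
        have h21 := hcnt 2 1
        obtain ⟨t, ht⟩ := hdvd
        have e3 : ∀ t : Fin 3, t = 0 ∨ t = 1 ∨ t = 2 := by decide
        intro i j
        rcases e3 i with rfl | rfl | rfl <;> rcases e3 j with rfl | rfl | rfl <;> omega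
      obtain ⟨c', hc', hcnt'⟩ := coronaPow_balanced G m ⟨c, hc, hbal⟩ l
      exact ⟨c', hc', fun i j => by rw [hcnt' i j]; omega⟩
  -- lower bound via a triangle
  obtain ⟨l', rfl⟩ : ∃ l', l = l' + 1 := ⟨l - 1, by omega⟩
  have ha : Nonempty α := by
    rw [← Fintype.card_pos_iff]; omega
  obtain ⟨a⟩ := ha
  set t : coronaType α (Fin m) l' := coronaBase (Fin m) l' a with ht
  have hlow : ∀ k, (coronaPow G (pathGraph m) (l' + 1)).EquitablyColorable k → 3 ≤ k := by
    intro k hk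
    have h01 : (pathGraph m).Adj ⟨0, by omega⟩ ⟨1, by omega⟩ := by
      rw [pathGraph_adj]; left; rfl
    have A3 : ((coronaPow G (pathGraph m) l').corona (pathGraph m)).Adj
        (Sum.inr (t, ⟨0, by omega⟩)) (Sum.inr (t, ⟨1, by omega⟩)) := ⟨rfl, h01⟩
    have A1 : ((coronaPow G (pathGraph m) l').corona (pathGraph m)).Adj
        (Sum.inl t) (Sum.inr (t, ⟨0, by omega⟩)) := rfl
    have A2 : ((coronaPow G (pathGraph m) l').corona (pathGraph m)).Adj
        (Sum.inl t) (Sum.inr (t, ⟨1, by omega⟩)) := rfl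
    exact three_le_of_equit ((coronaPow G (pathGraph m) l').corona (pathGraph m))
      (Sum.inl t) (Sum.inr (t, ⟨0, by omega⟩)) (Sum.inr (t, ⟨1, by omega⟩)) A1 A2 A3 hk
  have h3mem : 3 ∈ {k | (coronaPow G (pathGraph m) (l' + 1)).EquitablyColorable k} := hup
  refine le_antisymm (Nat.sInf_le h3mem) ?_
  exact le_csInf ⟨3, h3mem⟩ fun k hk => hlow k hk
end
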